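/- For positive invertible operators A, B and ν ∈ [0,1] with r = min{ν, 1−ν}, the weighted geometric mean dominates the refined harmonic-side expression: A♯_ν B ≥ { A⁻¹♯_ν B⁻¹ + 2r((A⁻¹+B⁻¹)/2 − A⁻¹♯_{1/2}B⁻¹) }⁻¹ in the Loewner order. -/

import Mathlib

open scoped NNReal

set_option linter.unusedSectionVars false
set_option synthInstance.maxHeartbeats 1000000
set_option maxHeartbeats 1000000

variable {H : Type*} [NormedAddCommGroup H] [InnerProductSpace ℂ H] [CompleteSpace H]

/-- The weighted operator geometric mean `A ♯_ν B = A^{1/2} (A^{-1/2} B A^{-1/2})^ν A^{1/2}`. -/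
noncomputable def geomMean (A B : H →L[ℂ] H) (ν : ℝ) : H →L[ℂ] H :=
  A ^ ((1:ℝ)/2) * (A ^ (-(1:ℝ)/2) * B * A ^ (-(1:ℝ)/2)) ^ ν * A ^ ((1:ℝ)/2)

namespace GeomMeanAux

variable {X Y : H →L[ℂ] H}

private lemma spec0 (hX : IsUnit X) : (0:ℝ≥0) ∉ spectrum ℝ≥0 X :=
  spectrum.zero_notMem ℝ≥0 hX

private lemma rpow_unit (hX : 0 ≤ X) (hXu : IsUnit X) (y : ℝ) : IsUnit (X ^ y) :=
  ⟨⟨X ^ y, X ^ (-y), CFC.rpow_mul_rpow_neg y (hXu.isStrictlyPositive hX),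
    CFC.rpow_neg_mul_rpow y (hXu.isStrictlyPositive hX)⟩, rfl⟩

private lemma hexp : (-(1:ℝ)/2) = -((1:ℝ)/2) := by norm_num

private lemma CD_one (hX : 0 ≤ X) (hXu : IsUnit X) :
    X ^ ((1:ℝ)/2) * X ^ (-(1:ℝ)/2) = 1 := by
  rw [hexp]; exact CFC.rpow_mul_rpow_neg _ (hXu.isStrictlyPositive hX)

private lemma DC_one (hX : 0 ≤ X) (hXu : IsUnit X) :
    X ^ (-(1:ℝ)/2) * X ^ ((1:ℝ)/2) = 1 := by
  rw [hexp]; exact CFC.rpow_neg_mul_rpow _ (hXu.isStrictlyPositive hX)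

private lemma CC_eq (hX : 0 ≤ X) (hXu : IsUnit X) :
    X ^ ((1:ℝ)/2) * X ^ ((1:ℝ)/2) = X := by
  rw [← CFC.rpow_add hXu]
  norm_num
  exact CFC.rpow_one X hX

private lemma rinv_eq {a b : H →L[ℂ] H} (h1 : a * b = 1) (h2 : b * a = 1) :
    Ring.inverse a = b := by
  have hu : IsUnit a := ⟨⟨a, b, h1, h2⟩, rfl⟩
  rw [← hu.unit_spec, Ring.inverse_unit]
  exact Units.inv_eq_of_mul_eq_one_right (by rw [hu.unit_spec]; exact h1)

section Geom

private lemma T_nonneg (hY : 0 ≤ Y) : 0 ≤ X ^ (-(1:ℝ)/2) * Y * X ^ (-(1:ℝ)/2) :=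
  conjugate_nonneg_of_nonneg hY CFC.rpow_nonneg

private lemma T_unit (hX : 0 ≤ X) (hXu : IsUnit X) (hYu : IsUnit Y) : IsUnit (X ^ (-(1:ℝ)/2) * Y * X ^ (-(1:ℝ)/2)) :=
  ((rpow_unit hX hXu _).mul hYu).mul (rpow_unit hX hXu _)

private lemma geom_nonneg {ν : ℝ} : 0 ≤ geomMean X Y ν :=
  conjugate_nonneg_of_nonneg CFC.rpow_nonneg CFC.rpow_nonneg

private lemma geom_mul (hX : 0 ≤ X) (hY : 0 ≤ Y) (hXu : IsUnit X) (hYu : IsUnit Y) (ν : ℝ) :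
    geomMean X Y ν * (X ^ (-(1:ℝ)/2) *
      (X ^ (-(1:ℝ)/2) * Y * X ^ (-(1:ℝ)/2)) ^ (-ν) * X ^ (-(1:ℝ)/2)) = 1 := by
  set C := X ^ ((1:ℝ)/2)
  set D := X ^ (-(1:ℝ)/2)
  set T := D * Y * D with hT
  have hCD : ∀ Z : H →L[ℂ] H, C * (D * Z) = Z := fun Z => by
    rw [← mul_assoc, CD_one hX hXu, one_mul]
  have hTν : ∀ Z : H →L[ℂ] H, T ^ ν * (T ^ (-ν) * Z) = Z := fun Z => by
    rw [← mul_assoc, CFC.rpow_mul_rpow_neg ν ((T_unit hX hXu hYu).isStrictlyPositive (T_nonneg hY)),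
      one_mul]
  show C * T ^ ν * C * (D * T ^ (-ν) * D) = 1
  simp only [mul_assoc]
  rw [hCD, hTν, CD_one hX hXu]

private lemma mul_geom (hX : 0 ≤ X) (hY : 0 ≤ Y) (hXu : IsUnit X) (hYu : IsUnit Y) (ν : ℝ) :
    (X ^ (-(1:ℝ)/2) * (X ^ (-(1:ℝ)/2) * Y * X ^ (-(1:ℝ)/2)) ^ (-ν) * X ^ (-(1:ℝ)/2)) *
      geomMean X Y ν = 1 := by
  set C := X ^ ((1:ℝ)/2)
  set D := X ^ (-(1:ℝ)/2)
  set T := D * Y * D with hT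
  have hDC : ∀ Z : H →L[ℂ] H, D * (C * Z) = Z := fun Z => by
    rw [← mul_assoc, DC_one hX hXu, one_mul]
  have hTν : ∀ Z : H →L[ℂ] H, T ^ (-ν) * (T ^ ν * Z) = Z := fun Z => by
    rw [← mul_assoc, CFC.rpow_neg_mul_rpow ν ((T_unit hX hXu hYu).isStrictlyPositive (T_nonneg hY)),
      one_mul]
  show D * T ^ (-ν) * D * (C * T ^ ν * C) = 1
  simp only [mul_assoc]
  rw [hDC, hTν, DC_one hX hXu]

private lemma geom_unit (hX : 0 ≤ X) (hY : 0 ≤ Y) (hXu : IsUnit X) (hYu : IsUnit Y) (ν : ℝ) : IsUnit (geomMean X Y ν) :=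
  ⟨⟨_, _, geom_mul hX hY hXu hYu ν, mul_geom hX hY hXu hYu ν⟩, rfl⟩

end Geom

end GeomMeanAux

namespace GeomMeanAux

variable {X Y : H →L[ℂ] H}

private lemma geom_inverse (hX : 0 ≤ X) (hY : 0 ≤ Y) (hXu : IsUnit X) (hYu : IsUnit Y) (ν : ℝ) :
    geomMean (Ring.inverse X) (Ring.inverse Y) ν = Ring.inverse (geomMean X Y ν) := by
  rw [rinv_eq (geom_mul hX hY hXu hYu ν) (mul_geom hX hY hXu hYu ν)]
  set C := X ^ ((1:ℝ)/2) with hC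
  set D := X ^ (-(1:ℝ)/2) with hD
  set T := D * Y * D with hT
  set u := hXu.unit with hu
  have huX : (u : H →L[ℂ] H) = X := hXu.unit_spec
  have hXinv : Ring.inverse X = (↑u⁻¹ : H →L[ℂ] H) := by rw [← huX, Ring.inverse_unit]
  have hu0 : (0 : H →L[ℂ] H) ≤ u := huX ▸ hX
  have hXinv0 : (0 : H →L[ℂ] H) ≤ (↑u⁻¹ : H →L[ℂ] H) := CFC.inv_nonneg_of_nonneg u hu0
  have e1 : (Ring.inverse X) ^ ((1:ℝ)/2) = D := by
    rw [hXinv, hD, hexp, ← CFC.rpow_neg u ((1:ℝ)/2) hu0, huX]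
  have e2 : (Ring.inverse X) ^ (-(1:ℝ)/2) = C := by
    rw [hXinv, hC, hexp, CFC.rpow_neg u⁻¹ ((1:ℝ)/2) hXinv0, inv_inv, huX]
  have hCD : ∀ Z : H →L[ℂ] H, C * (D * Z) = Z := fun Z => by
    rw [← mul_assoc, CD_one hX hXu, one_mul]
  have hDC : ∀ Z : H →L[ℂ] H, D * (C * Z) = Z := fun Z => by
    rw [← mul_assoc, DC_one hX hXu, one_mul]
  have hTu : IsUnit T := T_unit hX hXu hYu
  have hT1 : T * (C * Ring.inverse Y * C) = 1 := by
    show D * Y * D * (C * Ring.inverse Y * C) = 1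
    simp only [mul_assoc]
    rw [hDC, ← mul_assoc Y, Ring.mul_inverse_cancel Y hYu, one_mul, DC_one hX hXu]
  have hT2 : (C * Ring.inverse Y * C) * T = 1 := by
    show C * Ring.inverse Y * C * (D * Y * D) = 1
    simp only [mul_assoc]
    rw [hCD, ← mul_assoc (Ring.inverse Y), Ring.inverse_mul_cancel Y hYu, one_mul,
      CD_one hX hXu]
  have hTcoe : (hTu.unit : H →L[ℂ] H) = T := hTu.unit_spec
  have hpow : (C * Ring.inverse Y * C) ^ ν = T ^ (-ν) := by
    have : C * Ring.inverse Y * C = (↑hTu.unit⁻¹ : H →L[ℂ] H) := by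
      rw [← Ring.inverse_unit hTu.unit, hTcoe]
      exact (rinv_eq hT1 hT2).symm
    have h0T : (0:H →L[ℂ] H) ≤ hTu.unit := by rw [hTcoe]; exact T_nonneg hY
    rw [this, ← CFC.rpow_neg hTu.unit ν h0T, hTcoe]
  rw [geomMean, e1, e2, hpow]

end GeomMeanAux

namespace GeomMeanAux

variable {X Y : H →L[ℂ] H}

private lemma smul_nonneg' {x : H →L[ℂ] H} (hx : 0 ≤ x) {c : ℝ} (hc : 0 ≤ c) :
    0 ≤ c • x := by
  have h := star_left_conjugate_nonneg hx ((Real.sqrt c : ℝ) • (1 : H →L[ℂ] H))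
  have he : star ((Real.sqrt c : ℝ) • (1 : H →L[ℂ] H)) * x *
      ((Real.sqrt c : ℝ) • (1 : H →L[ℂ] H)) = c • x := by
    simp [star_smul, smul_mul_assoc, mul_smul_comm, smul_smul, Real.mul_self_sqrt hc]
  rwa [he] at h

private lemma smul_le_smul' {x y : H →L[ℂ] H} (h : x ≤ y) {c : ℝ} (hc : 0 ≤ c) :
    c • x ≤ c • y := by
  rw [← sub_nonneg, ← smul_sub]
  exact smul_nonneg' (sub_nonneg.mpr h) hc

private lemma amgm (hX : 0 ≤ X) (hY : 0 ≤ Y) (hXu : IsUnit X) (hYu : IsUnit Y) :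
    geomMean X Y (1/2) ≤ (1/2 : ℝ) • (X + Y) := by
  set C := X ^ ((1:ℝ)/2) with hC
  set D := X ^ (-(1:ℝ)/2) with hD
  set T := D * Y * D with hT
  set S := T ^ ((1/2 : ℝ)) with hS
  have hTu : IsUnit T := T_unit hX hXu hYu
  have hT0 : 0 ≤ T := T_nonneg hY
  have hSS : S * S = T := by
    rw [hS, ← CFC.rpow_add hTu]
    norm_num
    exact CFC.rpow_one T hT0
  have hSsa : star S = S := IsSelfAdjoint.of_nonneg CFC.rpow_nonneg
  have h0 : 0 ≤ (1 - S) * (1 - S) := by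
    have := star_mul_self_nonneg (1 - S)
    rwa [star_sub, star_one, hSsa] at this
  have h2 : S + S ≤ 1 + T := by
    rw [← sub_nonneg]
    have : 1 + T - (S + S) = (1 - S) * (1 - S) := by
      simp only [mul_sub, sub_mul, one_mul, mul_one, hSS]
      abel
    rw [this]; exact h0
  have hCsa : star C = C := IsSelfAdjoint.of_nonneg CFC.rpow_nonneg
  have hconj := star_left_conjugate_le_conjugate h2 C
  rw [hCsa] at hconj
  have hCTC : C * T * C = Y := by
    rw [hT, ← mul_assoc, ← mul_assoc, CD_one hX hXu, one_mul, mul_assoc, DC_one hX hXu,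
      mul_one]
  have hL : C * (S + S) * C = geomMean X Y (1/2) + geomMean X Y (1/2) := by
    rw [mul_add, add_mul]; rfl
  have hR : C * (1 + T) * C = X + Y := by
    rw [mul_add, add_mul, mul_one, CC_eq hX hXu, hCTC]
  rw [hL, hR] at hconj
  have hg : geomMean X Y (1/2) = (1/2 : ℝ) • (geomMean X Y (1/2) + geomMean X Y (1/2)) := by
    rw [← two_smul ℝ (geomMean X Y (1/2)), smul_smul]
    norm_num
  rw [hg]
  exact smul_le_smul' hconj (by norm_num)

private lemma rinv_antitone {a b : H →L[ℂ] H} (ha : 0 ≤ a) (hau : IsUnit a) (hab : a ≤ b) :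
    Ring.inverse b ≤ Ring.inverse a := by
  lift b to (H →L[ℂ] H)ˣ using CStarAlgebra.isUnit_of_le a hab (hau.isStrictlyPositive ha)
  lift a to (H →L[ℂ] H)ˣ using hau
  rw [Ring.inverse_unit, Ring.inverse_unit]
  exact CStarAlgebra.inv_le_inv ha hab

end GeomMeanAux

theorem geomMean_ge_refined_harmonic (A B : H →L[ℂ] H) (hA : 0 ≤ A) (hB : 0 ≤ B)
    (hAu : IsUnit A) (hBu : IsUnit B) (ν : ℝ) (hν : ν ∈ Set.Icc (0:ℝ) 1)
    (r : ℝ) (hr : r = min ν (1 - ν)) :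
    Ring.inverse (geomMean (Ring.inverse A) (Ring.inverse B) ν +
        (2 * r) • ((1/2 : ℝ) • (Ring.inverse A + Ring.inverse B) -
          geomMean (Ring.inverse A) (Ring.inverse B) (1/2))) ≤
      geomMean A B ν := by
  obtain ⟨hν0, hν1⟩ := hν
  have hA' : 0 ≤ Ring.inverse A := by
    rw [← hAu.unit_spec, Ring.inverse_unit]
    exact CFC.inv_nonneg_of_nonneg hAu.unit (by rw [hAu.unit_spec]; exact hA)
  have hB' : 0 ≤ Ring.inverse B := by
    rw [← hBu.unit_spec, Ring.inverse_unit]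
    exact CFC.inv_nonneg_of_nonneg hBu.unit (by rw [hBu.unit_spec]; exact hB)
  have hA'u : IsUnit (Ring.inverse A) := isUnit_ringInverse.mpr hAu
  have hB'u : IsUnit (Ring.inverse B) := isUnit_ringInverse.mpr hBu
  set G := geomMean (Ring.inverse A) (Ring.inverse B) ν with hG
  have hGnn : 0 ≤ G := GeomMeanAux.geom_nonneg
  have hGu : IsUnit G := GeomMeanAux.geom_unit hA' hB' hA'u hB'u ν
  have hr0 : 0 ≤ 2 * r := by
    have : 0 ≤ min ν (1 - ν) := le_min hν0 (by linarith)
    rw [hr]; linarith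
  have hle : G ≤ G + (2 * r) • ((1/2 : ℝ) • (Ring.inverse A + Ring.inverse B) -
      geomMean (Ring.inverse A) (Ring.inverse B) (1/2)) :=
    le_add_of_nonneg_right (GeomMeanAux.smul_nonneg'
      (sub_nonneg.mpr (GeomMeanAux.amgm hA' hB' hA'u hB'u)) hr0)
  have hmain := GeomMeanAux.rinv_antitone hGnn hGu hle
  have hkey : Ring.inverse G = geomMean A B ν := by
    rw [hG, GeomMeanAux.geom_inverse hA hB hAu hBu ν]
    have hgu : IsUnit (geomMean A B ν) := GeomMeanAux.geom_unit hA hB hAu hBu ν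
    rw [← hgu.unit_spec, Ring.inverse_unit, Ring.inverse_unit, inv_inv]
  rw [hkey] at hmain
  exact hmain
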